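/- Let D be odd and B ∈ S_D with |B| = (D+1)/2. Then η_D = e_1 + e_3 + ... + e_D belongs to E = 𝔼_B. -/

import Mathlib

open Finset

abbrev Vec := ℕ →₀ ZMod 2

/-- The basis vector `e_i`. -/
noncomputable def e (i : ℕ) : Vec := Finsupp.single i 1

/-- For an interval `p = (a,b)` (representing `[a,b]`), the vector `e_I = ∑_{i∈[a,b]} e_i`. -/
noncomputable def eI (p : ℕ × ℕ) : Vec := ∑ j ∈ Finset.Icc p.1 p.2, e j

/-- The map `ξ_i` on intervals. -/
def tint (i : ℕ) (p : ℕ × ℕ) : ℕ × ℕ :=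
  if i ≤ p.1 then (p.1 + 2, p.2 + 2)
  else if p.2 + 2 ≤ i then p
  else (p.1, p.2 + 2)

/-- The map `t_i` on sets of intervals: `t_i(B') = ξ_i(B') ∪ {[i,i]}`. -/
def tmap (i : ℕ) (B : Finset (ℕ × ℕ)) : Finset (ℕ × ℕ) :=
  B.image (tint i) ∪ {(i, i)}

/-- The inductively defined family `S_D`. -/
inductive IsS : ℕ → Finset (ℕ × ℕ) → Prop
  | empty (D : ℕ) : IsS D ∅
  | one : IsS 1 {(1, 1)}
  | step (D i : ℕ) (B' : Finset (ℕ × ℕ)) (h1 : 1 ≤ i) (h2 : i ≤ D + 2)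
      (h : IsS D B') : IsS (D + 2) (tmap i B')

def primEven (D k : ℕ) : Finset (ℕ × ℕ) := (Finset.Icc 1 k).image fun j => (j, D + 1 - j)
def primOddA (D k : ℕ) : Finset (ℕ × ℕ) := (Finset.Icc 1 k).image fun j => (j, D - j)
def primOddB (D k : ℕ) : Finset (ℕ × ℕ) := (Finset.Icc 1 k).image fun j => (j + 1, D + 1 - j)

/-- The primitive elements of `𝕊_D`. -/
def IsPrim (D : ℕ) (B : Finset (ℕ × ℕ)) : Prop :=
  B = ∅ ∨
  (Even D ∧ ∃ k, 1 ≤ k ∧ k ≤ D / 2 ∧ B = primEven D k) ∨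
  (Odd D ∧ ∃ k, Odd k ∧ 1 ≤ k ∧ k ≤ (D - 1) / 2 ∧ (B = primOddA D k ∨ B = primOddB D k))

/-- The inductively defined family `𝕊_D`. -/
inductive IsSS : ℕ → Finset (ℕ × ℕ) → Prop
  | prim (D : ℕ) (B : Finset (ℕ × ℕ)) : IsPrim D B → IsSS D B
  | one : IsSS 1 {(1, 1)}
  | step (D i : ℕ) (B' : Finset (ℕ × ℕ)) (h1 : 1 ≤ i) (h2 : i ≤ D + 2)
      (h : IsSS D B') : IsSS (D + 2) (tmap i B')

/-- The subspace `𝔼_B` spanned by the `e_I`, `I ∈ B`. -/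
noncomputable def EB (B : Finset (ℕ × ℕ)) : Submodule (ZMod 2) Vec :=
  Submodule.span (ZMod 2) (eI '' (B : Set (ℕ × ℕ)))

/-- Two intervals are non-touching. -/
def Nontouch (p q : ℕ × ℕ) : Prop := p.2 + 2 ≤ q.1 ∨ q.2 + 2 ≤ p.1

/-- `p ≺ q`: `p = [a,b]` is strictly nested inside `q = [a',b']`, i.e. `a' < a ≤ b < b'`. -/
def Nested (p q : ℕ × ℕ) : Prop := q.1 < p.1 ∧ p.1 ≤ p.2 ∧ p.2 < q.2

/-- `η_D = e_1 + e_3 + ⋯ + e_D` (`D` odd). -/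
noncomputable def eta (D : ℕ) : Vec := ∑ j ∈ (Finset.Icc 1 D).filter (fun j => j % 2 = 1), e j

noncomputable def Tfun (i k : ℕ) : Vec :=
  if k + 1 < i then e k
  else if k + 1 = i then e k + e (k + 1) + e (k + 2)
  else e (k + 2)

/-- The linear map `T_i : V_{D-2} → V_D`. -/
noncomputable def Tlin (i : ℕ) : Vec →ₗ[ZMod 2] Vec :=
  Finsupp.linearCombination (ZMod 2) (Tfun i)

/-- The inductively defined family `𝒻(V_D)` of subspaces. -/
inductive IsF : ℕ → Submodule (ZMod 2) Vec → Prop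
  | zero (D : ℕ) : IsF D ⊥
  | one : IsF 1 (Submodule.span (ZMod 2) {e 1})
  | step (D i : ℕ) (E' : Submodule (ZMod 2) Vec) (h1 : 1 ≤ i) (h2 : i ≤ D + 2)
      (h : IsF D E') :
      IsF (D + 2) (Submodule.map (Tlin i) E' ⊔ Submodule.span (ZMod 2) {e i})

/-- The subspace `V_D = ⟨e_1,…,e_D⟩`. -/
noncomputable def VD (D : ℕ) : Submodule (ZMod 2) Vec :=
  Submodule.span (ZMod 2) (e '' Set.Icc 1 D)

/-- The symplectic form with `(e_i,e_j) = 1` iff `|i-j| = 1`. -/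
noncomputable def symp (x y : Vec) : ZMod 2 :=
  x.sum fun i xi => xi * (y (i + 1) + if 1 ≤ i then y (i - 1) else 0)


lemma e_apply (k m : ℕ) : e k m = if k = m then (1 : ZMod 2) else 0 := by
  simp [e, Finsupp.single_apply]

lemma sum_delta (s : Finset ℕ) (c : ℕ) (P : Prop) [Decidable P] :
    (∑ j ∈ s, if j = c ∧ P then (1 : ZMod 2) else 0) = if c ∈ s ∧ P then 1 else 0 := by
  by_cases hP : P
  · simp only [hP, and_true]
    exact Finset.sum_ite_eq' s c (fun _ => 1)
  · simp [hP]

lemma Tfun_apply (i j m : ℕ) (hi : 1 ≤ i) :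
    Tfun i j m = (if j = m ∧ m + 1 < i then (1 : ZMod 2) else 0)
      + (if j = m ∧ m + 1 = i then 1 else 0)
      + (if j = i - 1 ∧ m = i then 1 else 0)
      + (if j = i - 1 ∧ m = i + 1 then 1 else 0)
      + (if j = m - 2 ∧ i + 2 ≤ m then 1 else 0) := by
  unfold Tfun
  split_ifs with h1 h2 <;>
    simp only [Finsupp.add_apply, e_apply] <;>
    split_ifs <;> first | rfl | omega | decide | (exfalso; omega)

lemma Tlin_apply_sum (i : ℕ) (s : Finset ℕ) :
    Tlin i (∑ j ∈ s, e j) = ∑ j ∈ s, Tfun i j := by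
  rw [map_sum]
  refine Finset.sum_congr rfl fun j _ => ?_
  unfold Tlin e
  rw [Finsupp.linearCombination_single, one_smul]

lemma sum_Tfun_apply (i m : ℕ) (s : Finset ℕ) (hi : 1 ≤ i) :
    (∑ j ∈ s, Tfun i j) m
      = (if m ∈ s ∧ m + 1 < i then (1 : ZMod 2) else 0)
      + (if m ∈ s ∧ m + 1 = i then 1 else 0)
      + (if (i - 1) ∈ s ∧ m = i then 1 else 0)
      + (if (i - 1) ∈ s ∧ m = i + 1 then 1 else 0)
      + (if (m - 2) ∈ s ∧ i + 2 ≤ m then 1 else 0) := by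
  rw [Finset.sum_apply', Finset.sum_congr rfl fun j _ => Tfun_apply i j m hi]
  rw [Finset.sum_add_distrib, Finset.sum_add_distrib, Finset.sum_add_distrib,
    Finset.sum_add_distrib]
  rw [sum_delta, sum_delta, sum_delta, sum_delta, sum_delta]

lemma eta_apply (D m : ℕ) :
    eta D m = if m % 2 = 1 ∧ 1 ≤ m ∧ m ≤ D then (1 : ZMod 2) else 0 := by
  unfold eta
  rw [Finset.sum_apply']
  simp only [e_apply]
  rw [Finset.sum_ite_eq' _ m (fun _ => (1 : ZMod 2))]
  simp only [Finset.mem_filter, Finset.mem_Icc]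
  split_ifs <;> first | rfl | omega | (exfalso; omega)

lemma eI_apply (p : ℕ × ℕ) (m : ℕ) :
    eI p m = if p.1 ≤ m ∧ m ≤ p.2 then (1 : ZMod 2) else 0 := by
  unfold eI
  rw [Finset.sum_apply']
  simp only [e_apply]
  rw [Finset.sum_ite_eq' _ m (fun _ => (1 : ZMod 2))]
  simp [Finset.mem_Icc]

lemma key (D i : ℕ) (hD : D % 2 = 1) (hi1 : 1 ≤ i) (hi2 : i ≤ D + 2) :
    eta (D + 2) = Tlin i (eta D) + e i := by
  have h0 : eta D = ∑ j ∈ (Finset.Icc 1 D).filter (fun j => j % 2 = 1), e j := rfl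
  ext m
  rw [Finsupp.add_apply, h0, Tlin_apply_sum, sum_Tfun_apply i m _ hi1, eta_apply, e_apply]
  simp only [Finset.mem_filter, Finset.mem_Icc]
  split_ifs <;> first | rfl | decide | omega | (exfalso; omega)

lemma Tlin_eI (i : ℕ) (hi : 1 ≤ i) (p : ℕ × ℕ) : Tlin i (eI p) = eI (tint i p) := by
  obtain ⟨a, b⟩ := p
  have h0 : eI (a, b) = ∑ j ∈ Finset.Icc a b, e j := rfl
  ext m
  rw [h0, Tlin_apply_sum, sum_Tfun_apply i m _ hi, eI_apply]
  unfold tint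
  simp only [Finset.mem_Icc]
  split_ifs <;> first | rfl | decide | omega | (exfalso; omega)

lemma eI_pair (i : ℕ) : eI (i, i) = e i := by
  simp [eI]

lemma e_mem (i : ℕ) (B' : Finset (ℕ × ℕ)) : e i ∈ EB (tmap i B') := by
  rw [← eI_pair]
  apply Submodule.subset_span
  exact Set.mem_image_of_mem _ (by simp [tmap])

lemma Tlin_mem (i : ℕ) (hi : 1 ≤ i) (B' : Finset (ℕ × ℕ)) {x : Vec} (hx : x ∈ EB B') :
    Tlin i x ∈ EB (tmap i B') := by
  have hle : Submodule.map (Tlin i) (EB B') ≤ EB (tmap i B') := by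
    rw [EB, Submodule.map_span]
    apply Submodule.span_mono
    rintro y ⟨_, ⟨p, hp, rfl⟩, rfl⟩
    refine ⟨tint i p, ?_, (Tlin_eI i hi p).symm⟩
    simp only [tmap, Finset.coe_union, Finset.coe_image, Set.mem_union]
    exact Or.inl ⟨p, hp, rfl⟩
  exact hle ⟨x, hx, rfl⟩

lemma card_tmap_le (i : ℕ) (B' : Finset (ℕ × ℕ)) : (tmap i B').card ≤ B'.card + 1 := by
  calc (tmap i B').card ≤ (B'.image (tint i)).card + ({((i : ℕ), (i : ℕ))} : Finset (ℕ × ℕ)).card :=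
        Finset.card_union_le _ _
    _ ≤ B'.card + 1 := by
        have := Finset.card_image_le (s := B') (f := tint i)
        simp only [Finset.card_singleton]
        omega

lemma card_le_of_IsS (D : ℕ) (B : Finset (ℕ × ℕ)) (h : IsS D B) : B.card ≤ (D + 1) / 2 := by
  induction h with
  | empty D => simp
  | one => simp
  | step D i B' h1 h2 h ih =>
      have := card_tmap_le i B'
      omega

lemma stmt8_aux (D : ℕ) (B : Finset (ℕ × ℕ)) (hB : IsS D B) :
    D % 2 = 1 → B.card = (D + 1) / 2 → eta D ∈ EB B := by
  induction hB with
  | empty D =>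
      intro h1 h2
      exfalso
      simp only [Finset.card_empty] at h2
      omega
  | one =>
      intro _ _
      have h1 : eta 1 = eI (1, 1) := by
        rw [eI_pair]
        ext m
        rw [eta_apply, e_apply]
        split_ifs <;> first | rfl | omega | (exfalso; omega)
      rw [h1]
      exact Submodule.subset_span ⟨(1, 1), by simp, rfl⟩
  | step D i B' h1 h2 hB' ih =>
      intro hD hcard
      have hD' : D % 2 = 1 := by omega
      have hb' : B'.card = (D + 1) / 2 := by
        have u1 := card_le_of_IsS D B' hB'
        have u2 := card_tmap_le i B'
        omega
      have hx := ih hD' hb'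
      rw [key D i hD' h1 h2]
      exact Submodule.add_mem _ (Tlin_mem i h1 B' hx) (e_mem i B')

/-- `D` odd, `B ∈ S_D`, `|B| = (D+1)/2` implies `η_D ∈ 𝔼_B`. -/
theorem stmt8 (D : ℕ) (hD : Odd D) (B : Finset (ℕ × ℕ)) (hB : IsS D B)
    (h : B.card = (D + 1) / 2) : eta D ∈ EB B :=
  stmt8_aux D B hB (Nat.odd_iff.mp hD) h
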